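/- Let n ≥ 1, and let β > 0, μ > 0, T > 0 be real numbers. Let L ∈ ℂ^{n×n} be a matrix such that for every nonzero U ∈ ℂ^n and every index i with |U_i| = max_{1≤j≤n} |U_j|, Re( conj(U_i)·(LU)_i ) < 0. Let N : ℂ → ℂ satisfy |N(ξ)| ≤ μβ for every ξ with |ξ| ≤ β, and |N(ξ₁) − N(ξ₂)| ≤ 2μ·|ξ₁ − ξ₂| for all ξ₁, ξ₂ with |ξ₁| ≤ β and |ξ₂| ≤ β. Suppose u : ℝ → ℂ^n is differentiable on [0,T] and satisfies, for every t ∈ [0,T] and every component j, u_j'(t) = −μ·u_j(t) + (L u(t))_j + N(u_j(t)). If max_j |u_j(0)| ≤ β, then max_j |u_j(t)| ≤ β for every t ∈ [0,T]. -/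

import Mathlib

theorem aux_hasDerivAt_normSq (f : ℝ → ℂ) (w : ℂ) (t : ℝ) (hf : HasDerivAt f w t) :
    HasDerivAt (fun s => Complex.normSq (f s)) (2 * ((starRingEnd ℂ) (f t) * w).re) t := by
  have hre : HasDerivAt (fun s => (f s).re) w.re t :=
    Complex.reCLM.hasFDerivAt.comp_hasDerivAt t hf
  have him : HasDerivAt (fun s => (f s).im) w.im t :=
    Complex.imCLM.hasFDerivAt.comp_hasDerivAt t hf
  have h := (hre.mul hre).add (him.mul him)
  have hfun : (fun s => Complex.normSq (f s)) = ((fun s => (f s).re) * fun s => (f s).re) +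
      (fun s => (f s).im) * fun s => (f s).im := by
    funext s; simp [Complex.normSq_apply]
  rw [hfun]
  refine h.congr_deriv ?_
  simp [Complex.mul_re, Complex.conj_re, Complex.conj_im]
  ring

theorem aux_eventually_lt (f : ℝ → ℝ) (d : ℝ) (t : ℝ) (hf : HasDerivAt f d t) (hd : d < 0) :
    ∀ᶠ s in nhdsWithin t (Set.Ioi t), f s < f t := by
  have hslope := hasDerivAt_iff_tendsto_slope.mp hf
  have h1 : ∀ᶠ s in nhdsWithin t {t}ᶜ, slope f t s < 0 :=
    hslope.eventually_lt_const hd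
  have h2 : ∀ᶠ s in nhdsWithin t (Set.Ioi t), slope f t s < 0 :=
    h1.filter_mono (nhdsWithin_mono t (fun s hs => ne_of_gt hs))
  filter_upwards [h2, self_mem_nhdsWithin] with s hs hst
  have hpos : (0:ℝ) < s - t := sub_pos.mpr hst
  rw [slope_def_field, div_lt_iff₀ hpos] at hs
  linarith

theorem complex_maximum_bound_principle (n : ℕ) (hn : 1 ≤ n)
    (β μ T : ℝ) (hβ : 0 < β) (hμ : 0 < μ) (hT : 0 < T)
    (L : Matrix (Fin n) (Fin n) ℂ)
    (hL : ∀ U : Fin n → ℂ, U ≠ 0 → ∀ i : Fin n,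
      (∀ j : Fin n, ‖U j‖ ≤ ‖U i‖) →
        ((starRingEnd ℂ) (U i) * L.mulVec U i).re < 0)
    (N : ℂ → ℂ)
    (hNbound : ∀ ξ : ℂ, ‖ξ‖ ≤ β → ‖N ξ‖ ≤ μ * β)
    (hNlip : ∀ ξ₁ ξ₂ : ℂ, ‖ξ₁‖ ≤ β → ‖ξ₂‖ ≤ β →
      ‖N ξ₁ - N ξ₂‖ ≤ 2 * μ * ‖ξ₁ - ξ₂‖)
    (u : ℝ → Fin n → ℂ)
    (hode : ∀ t ∈ Set.Icc (0 : ℝ) T, ∀ j : Fin n,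
      HasDerivAt (fun s => u s j) (-(μ : ℂ) * u t j + L.mulVec (u t) j + N (u t j)) t)
    (hinit : ∀ j : Fin n, ‖u 0 j‖ ≤ β) :
    ∀ t ∈ Set.Icc (0 : ℝ) T, ∀ j : Fin n, ‖u t j‖ ≤ β := by
  have habs_of_normSq : ∀ z : ℂ, Complex.normSq z ≤ β ^ 2 → ‖z‖ ≤ β := by
    intro z hz
    calc ‖z‖ = Real.sqrt (Complex.normSq z) := Complex.norm_def z
      _ ≤ Real.sqrt (β ^ 2) := Real.sqrt_le_sqrt hz
      _ = β := Real.sqrt_sq hβ.le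
  set C : Set ℝ := {t | t ∈ Set.Icc (0:ℝ) T ∧ ∀ s ∈ Set.Icc (0:ℝ) t, ∀ j, ‖u s j‖ ≤ β}
    with hC
  have h0C : (0:ℝ) ∈ C := by
    refine ⟨⟨le_refl 0, hT.le⟩, ?_⟩
    intro s hs j
    have : s = 0 := le_antisymm hs.2 hs.1
    rw [this]; exact hinit j
  have hbdd : BddAbove C := ⟨T, fun t ht => ht.1.2⟩
  set t₀ := sSup C with ht₀def
  have ht₀0 : 0 ≤ t₀ := le_csSup hbdd h0C
  have ht₀T : t₀ ≤ T := csSup_le ⟨0, h0C⟩ (fun t ht => ht.1.2)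
  have hcont : ∀ t ∈ Set.Icc (0:ℝ) T, ∀ j,
      ContinuousAt (fun s => u s j) t := fun t ht j => (hode t ht j).continuousAt
  -- bound strictly before t₀
  have hboundlt : ∀ s, 0 ≤ s → s < t₀ → ∀ j, ‖u s j‖ ≤ β := by
    intro s hs0 hst j
    obtain ⟨c, hcC, hsc⟩ := exists_lt_of_lt_csSup ⟨0, h0C⟩ hst
    exact hcC.2 s ⟨hs0, hsc.le⟩ j
  -- bound on all of [0, t₀]
  have hbound : ∀ s ∈ Set.Icc (0:ℝ) t₀, ∀ j, ‖u s j‖ ≤ β := by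
    intro s hs j
    rcases lt_or_eq_of_le hs.2 with h | h
    · exact hboundlt s hs.1 h j
    · subst h
      rcases eq_or_lt_of_le ht₀0 with h0 | h0
      · rw [← h0]; exact hinit j
      · have hc : Filter.Tendsto (fun r => ‖u r j‖) (nhdsWithin t₀ (Set.Iio t₀))
            (nhds (‖u t₀ j‖)) :=
          ((continuous_norm.continuousAt.comp (hcont t₀ ⟨ht₀0, ht₀T⟩ j)).tendsto).mono_left
            nhdsWithin_le_nhds
        refine le_of_tendsto hc ?_
        filter_upwards [Ioo_mem_nhdsLT_of_mem ⟨h0, le_refl t₀⟩] with r hr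
        exact hboundlt r hr.1.le hr.2 j
  -- if t₀ < T we can extend, contradiction
  have hkey : ¬ t₀ < T := by
    intro hltT
    have hmem : t₀ ∈ Set.Icc (0:ℝ) T := ⟨ht₀0, ht₀T⟩
    have hub : ∀ j, ‖u t₀ j‖ ≤ β := fun j => hbound t₀ ⟨ht₀0, le_refl t₀⟩ j
    have hev : ∀ j, ∀ᶠ s in nhdsWithin t₀ (Set.Ioi t₀), ‖u s j‖ ≤ β := by
      intro j
      rcases lt_or_eq_of_le (hub j) with hltb | heqb
      · have habs : Filter.Tendsto (fun s => ‖u s j‖) (nhds t₀)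
            (nhds (‖u t₀ j‖)) :=
          (continuous_norm.continuousAt.comp (hcont t₀ hmem j)).tendsto
        exact ((habs.eventually_lt_const hltb).filter_mono nhdsWithin_le_nhds).mono
          (fun s hs => hs.le)
      · -- the maximal case: use the differential inequality
        have hder : HasDerivAt (fun s => u s j)
            (-(μ:ℂ) * u t₀ j + L.mulVec (u t₀) j + N (u t₀ j)) t₀ := hode t₀ hmem j
        have hf := aux_hasDerivAt_normSq (fun s => u s j) _ t₀ hder
        have hnormz : Complex.normSq (u t₀ j) = β ^ 2 := by
          rw [← Complex.sq_norm, heqb]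
        have hzne : u t₀ ≠ 0 := by
          intro h0
          simp [h0] at heqb
          exact absurd heqb.symm (ne_of_gt hβ)
        have hmax : ∀ k, ‖u t₀ k‖ ≤ ‖u t₀ j‖ := by
          intro k; rw [heqb]; exact hub k
        have hB : ((starRingEnd ℂ) (u t₀ j) * L.mulVec (u t₀) j).re < 0 :=
          hL (u t₀) hzne j hmax
        have hA : ((starRingEnd ℂ) (u t₀ j) * (-(μ:ℂ) * u t₀ j)).re = -μ * β ^ 2 := by
          have h1 : (starRingEnd ℂ) (u t₀ j) * (-(μ:ℂ) * u t₀ j)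
              = -(μ:ℂ) * (u t₀ j * (starRingEnd ℂ) (u t₀ j)) := by ring
          rw [h1, Complex.mul_conj, hnormz, ← Complex.ofReal_neg,
            ← Complex.ofReal_mul, Complex.ofReal_re]
        have hCc : ((starRingEnd ℂ) (u t₀ j) * N (u t₀ j)).re ≤ μ * β ^ 2 := by
          calc ((starRingEnd ℂ) (u t₀ j) * N (u t₀ j)).re
              ≤ ‖(starRingEnd ℂ) (u t₀ j) * N (u t₀ j)‖ := Complex.re_le_norm _
            _ = ‖u t₀ j‖ * ‖N (u t₀ j)‖ := by
                rw [norm_mul, Complex.norm_conj]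
            _ ≤ β * (μ * β) :=
                mul_le_mul heqb.le (hNbound _ heqb.le) (norm_nonneg _) hβ.le
            _ = μ * β ^ 2 := by ring
        have hsplit : ((starRingEnd ℂ) (u t₀ j) *
              (-(μ:ℂ) * u t₀ j + L.mulVec (u t₀) j + N (u t₀ j))).re =
            ((starRingEnd ℂ) (u t₀ j) * (-(μ:ℂ) * u t₀ j)).re +
            ((starRingEnd ℂ) (u t₀ j) * L.mulVec (u t₀) j).re +
            ((starRingEnd ℂ) (u t₀ j) * N (u t₀ j)).re := by
          rw [mul_add, mul_add, Complex.add_re, Complex.add_re]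
        have hd : 2 * ((starRingEnd ℂ) (u t₀ j) *
            (-(μ:ℂ) * u t₀ j + L.mulVec (u t₀) j + N (u t₀ j))).re < 0 := by
          rw [hsplit, hA]
          linarith
        have hev' := aux_eventually_lt _ _ _ hf hd
        filter_upwards [hev'] with s hs
        apply habs_of_normSq
        have hs' : Complex.normSq (u s j) < β ^ 2 := by simpa [hnormz] using hs
        exact hs'.le
    have hall : ∀ᶠ s in nhdsWithin t₀ (Set.Ioi t₀), ∀ j, ‖u s j‖ ≤ β :=
      Filter.eventually_all.mpr hev
    obtain ⟨b, hb, hIoc⟩ := mem_nhdsGT_iff_exists_Ioc_subset.mp hall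
    set t₁ := min b T with ht₁def
    have ht₁ : t₀ < t₁ := lt_min hb hltT
    have ht₁C : t₁ ∈ C := by
      refine ⟨⟨le_trans ht₀0 ht₁.le, min_le_right _ _⟩, ?_⟩
      intro s hs j
      rcases le_or_gt s t₀ with h | h
      · exact hbound s ⟨hs.1, h⟩ j
      · exact hIoc ⟨h, le_trans hs.2 (min_le_left _ _)⟩ j
    exact absurd (le_csSup hbdd ht₁C) (not_le.mpr ht₁)
  have ht₀eq : t₀ = T := le_antisymm ht₀T (not_lt.mp hkey)
  intro t ht j
  exact hbound t ⟨ht.1, ht₀eq ▸ ht.2⟩ j
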